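/- For q ≥ 2, define s_q : ℕ → ℕ by s_q(0) = 0 and s_q(p) = s_q(p−1) + ⌈(s_q(p−1)+1)/(q−1)⌉. Then for all p ≥ 1 and z ∈ {0,1}, (s_q(p) + z) − ⌈(s_q(p) + z)/q⌉ = s_q(p−1) + z. -/
import Mathlib


/-- `s_q(0) = 0`, `s_q(p) = s_q(p−1) + ⌈(s_q(p−1)+1)/(q−1)⌉` (for `q ≥ 2`,
`⌈(s+1)/(q−1)⌉ = (s + q - 1)/(q - 1)` in natural-number division). -/
def sfun (q : ℕ) : ℕ → ℕ
  | 0 => 0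
  | p + 1 => sfun q p + (sfun q p + q - 1) / (q - 1)

/-- For `q ≥ 2`, `p ≥ 1` and `z ∈ {0,1}`:
`(s_q(p) + z) − ⌈(s_q(p) + z)/q⌉ = s_q(p−1) + z`
(with `⌈a/q⌉ = (a + q − 1)/q`). -/
theorem sfun_sub_ceil (q : ℕ) (hq : 2 ≤ q) (p : ℕ) (hp : 1 ≤ p) (z : ℕ) (hz : z ≤ 1) :
    (sfun q p + z) - (sfun q p + z + q - 1) / q = sfun q (p - 1) + z := by
  obtain ⟨p, rfl⟩ : ∃ p', p = p' + 1 := ⟨p - 1, by omega⟩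
  obtain ⟨k, rfl⟩ : ∃ k, q = k + 2 := ⟨q - 2, by omega⟩
  simp only [sfun, Nat.add_sub_cancel]
  generalize sfun (k + 2) p = s
  have hc : (s + (k + 2) - 1) / (k + 2 - 1) = s / (k + 1) + 1 := by
    have h1 : s + (k + 2) - 1 = s + (k + 1) := by omega
    have h2 : k + 2 - 1 = k + 1 := by omega
    rw [h1, h2, Nat.add_div_right _ (by omega)]
  rw [hc]
  have ha : s / (k + 1) * (k + 1) ≤ s := Nat.div_mul_le_self s (k + 1)
  have hb : s < (s / (k + 1) + 1) * (k + 1) :=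
    (Nat.div_lt_iff_lt_mul (by omega)).mp (Nat.lt_succ_self _)
  generalize hd : s / (k + 1) = d at ha hb ⊢
  have hm : s + (d + 1) + z + (k + 2) - 1 = s + d + z + k + 2 := by omega
  rw [hm]
  have key : (s + d + z + k + 2) / (k + 2) = d + 1 := by
    apply Nat.div_eq_of_lt_le
    · nlinarith
    · nlinarith
  rw [key]
  omega
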